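/- For every positive integer T, the width of the Multi-scale Random Walk parent function ρ on {1,…,T}, namely max_{1≤t≤T} |cut(t)|, is at most ⌊log₂ T⌋ + 1. -/

import Mathlib

/-- The Multi-scale Random Walk parent function: `ρ(t) = t - 2^{δ(t)}` where
`δ(t)` is the largest `i` with `2^i ∣ t` (the 2-adic valuation of `t`). -/
def mrwRho (t : ℕ) : ℕ := t - 2 ^ (padicValNat 2 t)

/-- The width of the MRW parent function on `{1, …, T}` is at most `⌊log₂ T⌋ + 1`:
for every `t ∈ {1, …, T}`, the cut `{s ∈ {1, …, T} : ρ(s) < t ≤ s}` has at most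
`⌊log₂ T⌋ + 1` elements. -/
theorem mrw_width_le (T : ℕ) (hT : 1 ≤ T) (t : ℕ) (ht : 1 ≤ t) (htT : t ≤ T) :
    ((Finset.Icc 1 T).filter (fun s => mrwRho s < t ∧ t ≤ s)).card ≤ Nat.log 2 T + 1 := by
  classical
  have key : ∀ s ∈ (Finset.Icc 1 T).filter (fun s => mrwRho s < t ∧ t ≤ s),
      (2 : ℕ) ^ (padicValNat 2 s) ∣ s ∧ t ≤ s ∧ s < t + 2 ^ (padicValNat 2 s) ∧ s ≤ T := by
    intro s hs
    simp only [Finset.mem_filter, Finset.mem_Icc] at hs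
    obtain ⟨⟨hs1, hsT⟩, hrho, hts⟩ := hs
    have hdvd : (2 : ℕ) ^ (padicValNat 2 s) ∣ s :=
      pow_padicValNat_dvd
    have hle : (2 : ℕ) ^ (padicValNat 2 s) ≤ s := Nat.le_of_dvd (by omega) hdvd
    refine ⟨hdvd, hts, ?_, hsT⟩
    unfold mrwRho at hrho
    omega
  have hcard := Finset.card_le_card_of_injOn (fun s => padicValNat 2 s)
    (s := (Finset.Icc 1 T).filter (fun s => mrwRho s < t ∧ t ≤ s))
    (t := Finset.range (Nat.log 2 T + 1))
    (by
      intro s hs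
      obtain ⟨hdvd, hts, _, hsT⟩ := key s hs
      have hle : (2 : ℕ) ^ (padicValNat 2 s) ≤ T :=
        le_trans (Nat.le_of_dvd (by omega) hdvd) hsT
      have : padicValNat 2 s ≤ Nat.log 2 T :=
        (Nat.le_log_iff_pow_le (by norm_num) (by omega)).mpr hle
      simp [Nat.lt_succ_iff, this])
    (by
      intro s1 hs1 s2 hs2 heq
      obtain ⟨hd1, ht1, hlt1, _⟩ := key s1 hs1
      obtain ⟨hd2, ht2, hlt2, _⟩ := key s2 hs2
      simp only at heq
      rw [heq] at hd1 hlt1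
      set i := padicValNat 2 s2 with hi
      rcases le_total s1 s2 with h | h
      · have hdvd : (2:ℕ)^i ∣ s2 - s1 := Nat.dvd_sub hd2 hd1
        have : s2 - s1 < 2^i := by omega
        have := Nat.eq_zero_of_dvd_of_lt hdvd this
        omega
      · have hdvd : (2:ℕ)^i ∣ s1 - s2 := Nat.dvd_sub hd1 hd2
        have hlt : s1 - s2 < 2^i := by omega
        have := Nat.eq_zero_of_dvd_of_lt hdvd hlt
        omega)
  simpa using hcard
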